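/- Let 0 < q < p ≤ 1 and let n ≥ 3 be a natural number. Then for every x ∈ [0,1], B_{n,p,q}(t⁴;x) = (p^{3n-3}/[n]³_{p,q}) x + (q(3p²+3pq+q²)[n-1]_{p,q} p^{2n-4}/[n]³_{p,q}) x² + (q³(3p²+2pq+q²)[n-1]_{p,q}[n-2]_{p,q} p^{n-3}/[n]³_{p,q}) x³ + (q⁶ [n-1]_{p,q}[n-2]_{p,q}[n-3]_{p,q}/[n]³_{p,q}) x⁴. -/

import Mathlib

open Finset Set Filter Topology

/-- The (p,q)-integer `[n]_{p,q} = ∑_{i=0}^{n-1} p^(n-1-i) q^i`. -/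
noncomputable def pqInt (p q : ℝ) (n : ℕ) : ℝ :=
  ∑ i ∈ Finset.range n, p ^ (n - 1 - i) * q ^ i

/-- The (p,q)-factorial `[n]_{p,q}! = ∏_{j=1}^n [j]_{p,q}`. -/
noncomputable def pqFactorial (p q : ℝ) (n : ℕ) : ℝ :=
  ∏ j ∈ Finset.range n, pqInt p q (j + 1)

/-- The (p,q)-binomial coefficient. -/
noncomputable def pqChoose (p q : ℝ) (n k : ℕ) : ℝ :=
  pqFactorial p q n / (pqFactorial p q k * pqFactorial p q (n - k))

/-- The node `p^(n-k) [k]_{p,q} / [n]_{p,q}` of the (p,q)-Bernstein operator. -/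
noncomputable def pqNode (p q : ℝ) (n k : ℕ) : ℝ :=
  p ^ (n - k) * pqInt p q k / pqInt p q n

/-- The basis function
`p^((k(k-1)-n(n-1))/2) C(n,k)_{p,q} x^k ∏_{s=0}^{n-k-1} (p^s - q^s x)`,
where `p^((k(k-1)-n(n-1))/2)` is written as `p^(k(k-1)/2) / p^(n(n-1)/2)`. -/
noncomputable def pqBasis (p q : ℝ) (n k : ℕ) (x : ℝ) : ℝ :=
  (p ^ (k.choose 2) / p ^ (n.choose 2)) * pqChoose p q n k * x ^ k *
    ∏ s ∈ Finset.range (n - k), (p ^ s - q ^ s * x)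

/-- The (p,q)-Bernstein operator `B_{n,p,q}(f;x)`. -/
noncomputable def pqBernstein (p q : ℝ) (n : ℕ) (f : ℝ → ℝ) (x : ℝ) : ℝ :=
  ∑ k ∈ Finset.range (n + 1), pqBasis p q n k x * f (pqNode p q n k)

/-- The bivariate (p,q)-Bernstein operator
`B_{n,m}^{(p₁,q₁),(p₂,q₂)}(f;x,y)`. -/
noncomputable def pqBernstein2 (p₁ q₁ p₂ q₂ : ℝ) (n m : ℕ)
    (f : ℝ → ℝ → ℝ) (x y : ℝ) : ℝ :=
  ∑ k ∈ Finset.range (n + 1), ∑ j ∈ Finset.range (m + 1),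
    pqBasis p₁ q₁ n k x * pqBasis p₂ q₂ m j y *
      f (pqNode p₁ q₁ n k) (pqNode p₂ q₂ m j)

open Finset

section
variable {p q : ℝ}

lemma pqInt_zero : pqInt p q 0 = 0 := by simp [pqInt]

lemma pqInt_succ (n : ℕ) : pqInt p q (n+1) = p ^ n + q * pqInt p q n := by
  unfold pqInt
  rw [Finset.sum_range_succ', Finset.mul_sum]
  simp only [Nat.add_sub_cancel, Nat.sub_zero, pow_zero, mul_one]
  rw [add_comm]
  congr 1
  refine Finset.sum_congr rfl fun i hi => ?_
  have h : n - (i+1) = n - 1 - i := by omega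
  rw [h]
  ring

lemma pqInt_succ' (n : ℕ) : pqInt p q (n+1) = q ^ n + p * pqInt p q n := by
  unfold pqInt
  rw [Finset.sum_range_succ, Finset.mul_sum]
  rw [add_comm]
  congr 1
  · simp
  refine Finset.sum_congr rfl fun i hi => ?_
  have hi' : i < n := Finset.mem_range.mp hi
  have h : n + 1 - 1 - i = (n - 1 - i) + 1 := by omega
  rw [h, pow_succ]
  ring

lemma pqInt_pos (hp : 0 < p) (hq : 0 < q) {n : ℕ} (hn : 0 < n) : 0 < pqInt p q n := by
  unfold pqInt
  refine Finset.sum_pos (fun i _ => by positivity) ?_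
  exact Finset.nonempty_range_iff.mpr (by omega)

lemma pqInt_split {k m : ℕ} (hk : k ≤ m) :
    pqInt p q m = q^(m-k) * pqInt p q k + p^k * pqInt p q (m-k) := by
  induction k with
  | zero => simp [pqInt_zero]
  | succ k ih =>
    have hk' : k ≤ m := by omega
    rw [ih hk']
    have h1 : m - k = (m - (k+1)) + 1 := by omega
    rw [h1, pqInt_succ' (m - (k+1)), pqInt_succ k, pow_succ]
    ring

lemma pqFactorial_succ (n : ℕ) :
    pqFactorial p q (n+1) = pqFactorial p q n * pqInt p q (n+1) :=
  Finset.prod_range_succ _ n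

lemma pqFactorial_pos (hp : 0 < p) (hq : 0 < q) (n : ℕ) : 0 < pqFactorial p q n := by
  unfold pqFactorial
  exact Finset.prod_pos fun j _ => pqInt_pos hp hq (by omega)

end
section
variable {p q : ℝ}

lemma pqChoose_zero (hp : 0 < p) (hq : 0 < q) (n : ℕ) : pqChoose p q n 0 = 1 := by
  unfold pqChoose
  rw [show pqFactorial p q 0 = 1 from by simp [pqFactorial]]
  rw [Nat.sub_zero, one_mul, div_self (pqFactorial_pos hp hq n).ne']

lemma pqChoose_self (hp : 0 < p) (hq : 0 < q) (n : ℕ) : pqChoose p q n n = 1 := by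
  unfold pqChoose
  rw [Nat.sub_self, show pqFactorial p q 0 = 1 from by simp [pqFactorial],
    mul_one, div_self (pqFactorial_pos hp hq n).ne']

lemma pqChoose_pascal (hp : 0 < p) (hq : 0 < q) {s k : ℕ} (h : k + 1 ≤ s) :
    pqChoose p q (s+1) (k+1) =
      q^(s-k) * pqChoose p q s k + p^(k+1) * pqChoose p q s (k+1) := by
  obtain ⟨r, rfl⟩ : ∃ r, s = k + 1 + r := ⟨s - (k+1), by omega⟩
  have key : pqInt p q (k+1+r+1) = q^(r+1) * pqInt p q (k+1) + p^(k+1) * pqInt p q (r+1) := by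
    have := pqInt_split (p := p) (q := q) (k := k+1) (m := k+1+r+1) (by omega)
    rw [show k+1+r+1 - (k+1) = r+1 from by omega] at this
    exact this
  unfold pqChoose
  rw [show k+1+r+1 - (k+1) = r+1 from by omega, show k+1+r - (k+1) = r from by omega,
      show k+1+r - k = r+1 from by omega,
      pqFactorial_succ (k+1+r), pqFactorial_succ k, pqFactorial_succ r, key]
  have h1 := (pqFactorial_pos hp hq (k+1+r)).ne'
  have h2 := (pqFactorial_pos hp hq k).ne'
  have h3 := (pqFactorial_pos hp hq r).ne'
  have h4 := (pqInt_pos hp hq (show 0 < k+1 from by omega)).ne'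
  have h5 := (pqInt_pos hp hq (show 0 < r+1 from by omega)).ne'
  field_simp

lemma pqInt_mul_choose (hp : 0 < p) (hq : 0 < q) {s j : ℕ} (h : j ≤ s) :
    pqInt p q (j+1) * pqChoose p q (s+1) (j+1) = pqInt p q (s+1) * pqChoose p q s j := by
  obtain ⟨r, rfl⟩ : ∃ r, s = j + r := ⟨s - j, by omega⟩
  unfold pqChoose
  rw [show j+r+1 - (j+1) = r from by omega, show j+r - j = r from by omega,
      pqFactorial_succ (j+r), pqFactorial_succ j]
  have h1 := (pqFactorial_pos hp hq (j+r)).ne'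
  have h2 := (pqFactorial_pos hp hq j).ne'
  have h3 := (pqFactorial_pos hp hq r).ne'
  have h4 := (pqInt_pos hp hq (show 0 < j+1 from by omega)).ne'
  have h5 := (pqInt_pos hp hq (show 0 < j+r+1 from by omega)).ne'
  field_simp

end
section
variable {p q : ℝ}

lemma pqBasis_succ_eq (hp : 0 < p) (hq : 0 < q) (m : ℕ) (x : ℝ) {k : ℕ} (hk : k ≤ m+1) :
    pqBasis p q (m+1) k x =
      (if k = 0 then 0 else x * (q/p)^(m+1-k) * pqBasis p q m (k-1) x) +
      (if k = m+1 then 0 else (1 - (q/p)^(m-k) * x) * pqBasis p q m k x) := by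
  have hp' := hp.ne'
  rcases k with _ | j
  · rw [if_pos rfl, if_neg (by omega), zero_add]
    unfold pqBasis
    rw [pqChoose_zero hp hq, pqChoose_zero hp hq, Nat.sub_zero, Nat.sub_zero,
        Finset.prod_range_succ,
        show (m+1).choose 2 = m.choose 2 + m from by
          rw [Nat.choose_succ_succ m 1, Nat.choose_one_right, Nat.add_comm]]
    rw [pow_add]
    simp only [div_pow]
    field_simp
    ring
  · rcases eq_or_lt_of_le hk with hjm | hjm
    · -- j + 1 = m + 1, so j = m
      have hj : j = m := by omega
      subst hj
      rw [if_neg (by omega), if_pos rfl, add_zero]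
      unfold pqBasis
      rw [show j+1 - 1 = j from by omega, pqChoose_self hp hq, pqChoose_self hp hq,
          Nat.sub_self, Nat.sub_self,
          Finset.prod_range_zero]
      rw [div_self (pow_ne_zero _ hp'), div_self (pow_ne_zero _ hp')]
      ring
    · -- j + 1 ≤ m
      have hjm' : j + 1 ≤ m := by omega
      rw [if_neg (by omega), if_neg (by omega)]
      obtain ⟨r, rfl⟩ : ∃ r, m = j + 1 + r := ⟨m - (j+1), by omega⟩
      unfold pqBasis
      rw [pqChoose_pascal hp hq hjm']
      rw [show j+1 - 1 = j from by omega,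
          show j+1+r - j = r+1 from by omega, show j+1+r+1 - (j+1) = r+1 from by omega,
          show j+1+r - (j+1) = r from by omega,
          Finset.prod_range_succ,
          show (j+1).choose 2 = j.choose 2 + j from by
            rw [Nat.choose_succ_succ j 1, Nat.choose_one_right, Nat.add_comm],
          show (j+1+r+1).choose 2 = (j+1+r).choose 2 + (j+1+r) from by
            rw [Nat.choose_succ_succ (j+1+r) 1, Nat.choose_one_right, Nat.add_comm]]
      rw [pow_add, pow_add]
      simp only [div_pow]
      field_simp
      ring

lemma pqBasis_sum (hp : 0 < p) (hq : 0 < q) (m : ℕ) (x : ℝ) :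
    ∑ k ∈ Finset.range (m+1), pqBasis p q m k x = 1 := by
  induction m with
  | zero =>
    simp [pqBasis, pqChoose, pqFactorial]
  | succ m ih =>
    rw [Finset.sum_congr rfl fun k hk =>
      pqBasis_succ_eq hp hq m x (by have := Finset.mem_range.mp hk; omega)]
    rw [Finset.sum_add_distrib]
    have e1 : ∑ k ∈ Finset.range (m+2),
        (if k = 0 then 0 else x * (q/p)^(m+1-k) * pqBasis p q m (k-1) x) =
        ∑ k ∈ Finset.range (m+1), x * (q/p)^(m-k) * pqBasis p q m k x := by
      rw [Finset.sum_range_succ']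
      simp
    have e2 : ∑ k ∈ Finset.range (m+2),
        (if k = m+1 then 0 else (1 - (q/p)^(m-k) * x) * pqBasis p q m k x) =
        ∑ k ∈ Finset.range (m+1), (1 - (q/p)^(m-k) * x) * pqBasis p q m k x := by
      rw [Finset.sum_range_succ, if_pos rfl, add_zero]
      refine Finset.sum_congr rfl fun k hk => ?_
      rw [if_neg (by have := Finset.mem_range.mp hk; omega)]
    have e3 : ∑ k ∈ Finset.range (m+1),
        (x * (q/p)^(m-k) * pqBasis p q m k x + (1 - (q/p)^(m-k) * x) * pqBasis p q m k x) =
        ∑ k ∈ Finset.range (m+1), pqBasis p q m k x :=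
      Finset.sum_congr rfl fun k hk => by ring
    rw [e1, e2, ← Finset.sum_add_distrib, e3, ih]

end
section
variable {p q : ℝ}

lemma pqBasis_step (hp : 0 < p) (hq : 0 < q) {m j : ℕ} (h : j ≤ m) (x : ℝ) :
    pqBasis p q (m+1) (j+1) x * (p^(m-j) * pqInt p q (j+1)) =
      pqInt p q (m+1) * x * pqBasis p q m j x := by
  obtain ⟨r, rfl⟩ : ∃ r, m = j + r := ⟨m - j, by omega⟩
  have key := pqInt_mul_choose hp hq (s := j + r) (j := j) (by omega)
  have hI : pqInt p q (j+1) ≠ 0 := (pqInt_pos hp hq (by omega)).ne'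
  have hC : pqChoose p q (j+r+1) (j+1) =
      pqInt p q (j+r+1) * pqChoose p q (j+r) j / pqInt p q (j+1) := by
    rw [eq_div_iff hI]
    linear_combination key
  unfold pqBasis
  rw [hC, show j+r - j = r from by omega, show j+r+1 - (j+1) = r from by omega,
      show (j+1).choose 2 = j.choose 2 + j from by
        rw [Nat.choose_succ_succ j 1, Nat.choose_one_right, Nat.add_comm],
      show (j+r+1).choose 2 = (j+r).choose 2 + (j+r) from by
        rw [Nat.choose_succ_succ (j+r) 1, Nat.choose_one_right, Nat.add_comm]]
  rw [pow_add, pow_add]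
  field_simp
  ring

lemma pqBasis_sum_step (hp : 0 < p) (hq : 0 < q) (m : ℕ) (x : ℝ) (g : ℕ → ℝ) :
    ∑ k ∈ Finset.range (m+2), pqBasis p q (m+1) k x * (p^(m+1-k) * pqInt p q k * g k) =
      pqInt p q (m+1) * x * ∑ j ∈ Finset.range (m+1), pqBasis p q m j x * g (j+1) := by
  rw [Finset.sum_range_succ']
  simp only [pqInt_zero, mul_zero, zero_mul, add_zero]
  rw [Finset.mul_sum]
  refine Finset.sum_congr rfl fun j hj => ?_
  have hj' : j ≤ m := by have := Finset.mem_range.mp hj; omega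
  have hstep := pqBasis_step hp hq hj' x
  rw [show m+1-(j+1) = m - j from by omega]
  calc pqBasis p q (m+1) (j+1) x * (p^(m-j) * pqInt p q (j+1) * g (j+1))
      = pqBasis p q (m+1) (j+1) x * (p^(m-j) * pqInt p q (j+1)) * g (j+1) := by ring
    _ = pqInt p q (m+1) * x * pqBasis p q m j x * g (j+1) := by rw [hstep]
    _ = pqInt p q (m+1) * x * (pqBasis p q m j x * g (j+1)) := by ring

lemma pqT1 (hp : 0 < p) (hq : 0 < q) (m : ℕ) (x : ℝ) :
    ∑ k ∈ Finset.range (m+1), pqBasis p q m k x * (p^(m-k) * pqInt p q k) =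
      pqInt p q m * x := by
  cases m with
  | zero => simp [pqInt_zero]
  | succ m =>
    have h := pqBasis_sum_step hp hq m x (fun _ => 1)
    simp only [mul_one] at h
    rw [h, pqBasis_sum hp hq, mul_one]

lemma pqT2 (hp : 0 < p) (hq : 0 < q) (m : ℕ) (x : ℝ) :
    ∑ k ∈ Finset.range (m+1), pqBasis p q m k x * (p^(m-k) * pqInt p q k)^2 =
      pqInt p q m * x * (p^(m-1) + q * pqInt p q (m-1) * x) := by
  cases m with
  | zero => simp [pqInt_zero]
  | succ m =>
    have h := pqBasis_sum_step hp hq m x (fun k => p^(m+1-k) * pqInt p q k)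
    have e : ∑ k ∈ Finset.range (m+1+1), pqBasis p q (m+1) k x * (p^(m+1-k) * pqInt p q k)^2
        = ∑ k ∈ Finset.range (m+2), pqBasis p q (m+1) k x *
            (p^(m+1-k) * pqInt p q k * (p^(m+1-k) * pqInt p q k)) :=
      Finset.sum_congr rfl fun k _ => by ring
    rw [e, h]
    have e2 : ∑ j ∈ Finset.range (m+1), pqBasis p q m j x * (p^(m+1-(j+1)) * pqInt p q (j+1))
        = ∑ j ∈ Finset.range (m+1), (pqBasis p q m j x * p^m
            + q * (pqBasis p q m j x * (p^(m-j) * pqInt p q j))) := by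
      refine Finset.sum_congr rfl fun j hj => ?_
      have hj' : j ≤ m := by have := Finset.mem_range.mp hj; omega
      rw [show m+1-(j+1) = m-j from by omega, pqInt_succ j]
      have hpow : p^(m-j) * p^j = p^m := by
        rw [← pow_add]; congr 1; omega
      linear_combination (pqBasis p q m j x) * hpow
    rw [e2, Finset.sum_add_distrib, ← Finset.sum_mul, pqBasis_sum hp hq,
        ← Finset.mul_sum, pqT1 hp hq]
    rw [show m+1-1 = m from by omega]
    ring

lemma pqT3 (hp : 0 < p) (hq : 0 < q) (m : ℕ) (x : ℝ) :
    ∑ k ∈ Finset.range (m+1), pqBasis p q m k x * (p^(m-k) * pqInt p q k)^3 =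
      pqInt p q m * x * (p^(2*(m-1)) + 2 * q * p^(m-1) * pqInt p q (m-1) * x
        + q^2 * pqInt p q (m-1) * x * (p^(m-2) + q * pqInt p q (m-2) * x)) := by
  cases m with
  | zero => simp [pqInt_zero]
  | succ m =>
    have h := pqBasis_sum_step hp hq m x (fun k => (p^(m+1-k) * pqInt p q k)^2)
    have e : ∑ k ∈ Finset.range (m+1+1), pqBasis p q (m+1) k x * (p^(m+1-k) * pqInt p q k)^3
        = ∑ k ∈ Finset.range (m+2), pqBasis p q (m+1) k x *
            (p^(m+1-k) * pqInt p q k * (p^(m+1-k) * pqInt p q k)^2) :=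
      Finset.sum_congr rfl fun k _ => by ring
    rw [e, h]
    have e2 : ∑ j ∈ Finset.range (m+1), pqBasis p q m j x * (p^(m+1-(j+1)) * pqInt p q (j+1))^2
        = ∑ j ∈ Finset.range (m+1), (pqBasis p q m j x * p^(2*m)
            + (2*q*p^m) * (pqBasis p q m j x * (p^(m-j) * pqInt p q j))
            + q^2 * (pqBasis p q m j x * (p^(m-j) * pqInt p q j)^2)) := by
      refine Finset.sum_congr rfl fun j hj => ?_
      have hj' : j ≤ m := by have := Finset.mem_range.mp hj; omega
      rw [show m+1-(j+1) = m-j from by omega, pqInt_succ j]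
      have hpow : p^(m-j) * p^j = p^m := by
        rw [← pow_add]; congr 1; omega
      have hpow2 : p^(2*m) = p^m * p^m := by rw [← pow_add]; congr 1; omega
      rw [hpow2]
      linear_combination (pqBasis p q m j x *
        (p^(m-j) * (p^j + q * pqInt p q j) + p^m + q * (p^(m-j) * pqInt p q j))) * hpow
    rw [e2, Finset.sum_add_distrib, Finset.sum_add_distrib, ← Finset.sum_mul,
        pqBasis_sum hp hq, ← Finset.mul_sum, pqT1 hp hq, ← Finset.mul_sum, pqT2 hp hq]
    rw [show m+1-1 = m from by omega, show m+1-2 = m-1 from by omega]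
    ring

end

theorem pqBernstein_moment_e4 (p q : ℝ) (n : ℕ)
    (hq : 0 < q) (hqp : q < p) (hp : p ≤ 1) (hn : 3 ≤ n)
    (x : ℝ) (hx : x ∈ Set.Icc (0 : ℝ) 1) :
    pqBernstein p q n (fun t => t ^ 4) x =
      (p ^ (3 * n - 3) / (pqInt p q n) ^ 3) * x +
      (q * (3 * p ^ 2 + 3 * p * q + q ^ 2) * pqInt p q (n - 1) * p ^ (2 * n - 4) /
        (pqInt p q n) ^ 3) * x ^ 2 +
      (q ^ 3 * (3 * p ^ 2 + 2 * p * q + q ^ 2) * pqInt p q (n - 1) * pqInt p q (n - 2) *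
        p ^ (n - 3) / (pqInt p q n) ^ 3) * x ^ 3 +
      (q ^ 6 * pqInt p q (n - 1) * pqInt p q (n - 2) * pqInt p q (n - 3) /
        (pqInt p q n) ^ 3) * x ^ 4 := by
  have hp0 : 0 < p := hq.trans hqp
  obtain ⟨e, rfl⟩ : ∃ e, n = e + 3 := ⟨n - 3, by omega⟩
  rw [show 3*(e+3)-3 = 3*e+6 from by omega, show 2*(e+3)-4 = 2*e+2 from by omega,
      show e+3-3 = e from by omega, show e+3-1 = e+2 from by omega,
      show e+3-2 = e+1 from by omega]
  have hsum : pqBernstein p q (e+3) (fun t => t^4) x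
      = (∑ k ∈ Finset.range (e+2+2), pqBasis p q (e+2+1) k x *
          (p^(e+2+1-k) * pqInt p q k * (p^(e+2+1-k) * pqInt p q k)^3))
        / (pqInt p q (e+2+1))^4 := by
    unfold pqBernstein
    rw [show e+3+1 = e+2+2 from by omega, show e+3 = e+2+1 from by omega,
        Finset.sum_div]
    refine Finset.sum_congr rfl fun k _ => ?_
    simp only [pqNode]
    rw [div_pow]
    ring
  have h := pqBasis_sum_step hp0 hq (e+2) x (fun k => (p^(e+2+1-k) * pqInt p q k)^3)
  have hInner : ∑ j ∈ Finset.range (e+2+1), pqBasis p q (e+2) j x *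
        (p^(e+2+1-(j+1)) * pqInt p q (j+1))^3
      = p^(3*e+6)
        + 3*q*p^(2*e+4) * (pqInt p q (e+2) * x)
        + 3*q^2*p^(e+2) * (pqInt p q (e+2) * x * (p^(e+1) + q * pqInt p q (e+1) * x))
        + q^3 * (pqInt p q (e+2) * x * (p^(2*e+2) + 2*q*p^(e+1)*pqInt p q (e+1)*x
            + q^2*pqInt p q (e+1)*x*(p^e + q*pqInt p q e*x))) := by
    have e5 : ∑ j ∈ Finset.range (e+2+1), pqBasis p q (e+2) j x *
          (p^(e+2+1-(j+1)) * pqInt p q (j+1))^3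
        = ∑ j ∈ Finset.range (e+2+1),
            (pqBasis p q (e+2) j x * p^(3*e+6)
            + (3*q*p^(2*e+4)) * (pqBasis p q (e+2) j x * (p^(e+2-j) * pqInt p q j))
            + (3*q^2*p^(e+2)) * (pqBasis p q (e+2) j x * (p^(e+2-j) * pqInt p q j)^2)
            + q^3 * (pqBasis p q (e+2) j x * (p^(e+2-j) * pqInt p q j)^3)) := by
      refine Finset.sum_congr rfl fun j hj => ?_
      have hj' : j ≤ e+2 := by have := Finset.mem_range.mp hj; omega
      have hpow : p^(e+2-j) * p^j = p^(e+2) := by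
        rw [← pow_add]; congr 1; omega
      rw [show e+2+1-(j+1) = e+2-j from by omega, pqInt_succ j,
          show p^(3*e+6) = (p^(e+2))^3 from by rw [← pow_mul]; congr 1; omega,
          show p^(2*e+4) = (p^(e+2))^2 from by rw [← pow_mul]; congr 1; omega,
          ← hpow]
      ring
    rw [e5, Finset.sum_add_distrib, Finset.sum_add_distrib, Finset.sum_add_distrib,
        ← Finset.sum_mul, pqBasis_sum hp0 hq, ← Finset.mul_sum, pqT1 hp0 hq,
        ← Finset.mul_sum, pqT2 hp0 hq, ← Finset.mul_sum, pqT3 hp0 hq]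
    rw [show e+2-1 = e+1 from by omega, show e+2-2 = e from by omega,
        show 2*(e+1) = 2*e+2 from by omega]
    ring
  rw [hsum, h, hInner]
  rw [show e+2+1 = e+3 from by omega]
  have hne : pqInt p q (e+3) ≠ 0 := (pqInt_pos hp0 hq (by omega)).ne'
  field_simp
  ring
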